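/- Let p be a prime, n any integer, and y, w integers both divisible by p with (y,w) ≠ (0,0) and y^3 ≠ n w^3. Then ν_p(y^3 − n w^3) ≥ 3 and, if moreover p ∤ n or the relevant reduced values are units, ν_p(y^3 − n w^3) is of the form 3m + ν_p(y'^3 − n w'^3) where y = p^m y', w = p^m w' with p ∤ y' or p ∤ w'. In particular, if n is not a cubic residue modulo p, then ν_p(y^3 − n w^3) is a multiple of 3. -/
import Mathlib

private lemma key_resid (p : ℕ) (hp : p.Prime) (n y w : ℤ)
    (hdvd : (p : ℤ) ∣ y ^ 3 - n * w ^ 3) (h : ¬ (p : ℤ) ∣ y ∨ ¬ (p : ℤ) ∣ w) :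
    ∃ x : ℤ, x ^ 3 ≡ n [ZMOD (p : ℤ)] := by
  haveI : Fact p.Prime := ⟨hp⟩
  have hpi : Prime (p : ℤ) := Nat.prime_iff_prime_int.mp hp
  have hw : ¬ (p : ℤ) ∣ w := by
    rcases h with h | h
    · intro hw
      apply h
      have h1 : (p : ℤ) ∣ n * w ^ 3 := ((hw.pow (by norm_num : (3:ℕ) ≠ 0))).mul_left n
      have h2 : (p : ℤ) ∣ y ^ 3 := by
        have := dvd_add hdvd h1
        simpa using this
      exact hpi.dvd_of_dvd_pow h2
    · exact h
  have hwz : (w : ZMod p) ≠ 0 := by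
    rwa [Ne, ZMod.intCast_zmod_eq_zero_iff_dvd]
  have hcast : ((y : ZMod p)) ^ 3 = n * (w : ZMod p) ^ 3 := by
    have := (ZMod.intCast_zmod_eq_zero_iff_dvd _ p).mpr hdvd
    push_cast at this
    linear_combination this
  refine ⟨(((y : ZMod p) * (w : ZMod p)⁻¹).val : ℤ), ?_⟩
  have h5 : (((((y : ZMod p) * (w : ZMod p)⁻¹).val : ℕ)) : ZMod p) ^ 3 = (n : ZMod p) := by
    rw [ZMod.natCast_val, ZMod.cast_id]
    field_simp
    linear_combination hcast
  rw [← ZMod.intCast_eq_intCast_iff]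
  push_cast
  exact h5

private lemma aux_mult (p : ℕ) (hp : p.Prime) (n : ℤ)
    (hnr : ¬ ∃ x : ℤ, x ^ 3 ≡ n [ZMOD (p : ℤ)]) :
    ∀ k : ℕ, ∀ y w : ℤ, y ^ 3 ≠ n * w ^ 3 →
      padicValInt p (y ^ 3 - n * w ^ 3) = k → 3 ∣ k := by
  haveI : Fact p.Prime := ⟨hp⟩
  intro k
  induction k using Nat.strong_induction_on with
  | _ k IH =>
    intro y w h3 hk
    by_cases hcase : (p : ℤ) ∣ y ∧ (p : ℤ) ∣ w
    · obtain ⟨⟨y1, rfl⟩, ⟨w1, rfl⟩⟩ := hcase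
      have hdiff : ((p : ℤ) * y1) ^ 3 - n * ((p : ℤ) * w1) ^ 3
          = (p : ℤ) ^ 3 * (y1 ^ 3 - n * w1 ^ 3) := by ring
      have hpne : ((p : ℤ) ^ 3 : ℤ) ≠ 0 := by
        have := hp.pos
        positivity
      have hz : y1 ^ 3 - n * w1 ^ 3 ≠ 0 := by
        intro h0
        apply h3
        have : ((p : ℤ) * y1) ^ 3 - n * ((p : ℤ) * w1) ^ 3 = 0 := by
          rw [hdiff, h0, mul_zero]
        linarith [this]
      have hval3 : padicValInt p ((p : ℤ) ^ 3) = 3 := by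
        have : ((p : ℤ) ^ 3) = ((p ^ 3 : ℕ) : ℤ) := by push_cast; ring
        rw [this, padicValInt.of_nat, padicValNat.prime_pow]
      rw [hdiff, padicValInt.mul hpne hz, hval3] at hk
      have h1 : 3 ∣ padicValInt p (y1 ^ 3 - n * w1 ^ 3) := by
        refine IH _ ?_ y1 w1 (by intro h0; exact hz (by linarith [h0])) rfl
        omega
      omega
    · have hnd : ¬ (p : ℤ) ∣ (y ^ 3 - n * w ^ 3) := by
        intro hd
        exact hnr (key_resid p hp n y w hd (by tauto))
      rw [padicValInt.eq_zero_of_not_dvd hnd] at hk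
      omega

/-- If `p ∣ y` and `p ∣ w` with `(y,w) ≠ (0,0)` and `y^3 ≠ n w^3`, then
`ν_p(y^3 − n w^3) ≥ 3`, and if moreover `n` is not a cubic residue modulo `p`,
then `ν_p(y^3 − n w^3)` is a multiple of 3. -/
theorem stmt_14 (p : ℕ) (hp : p.Prime) (n y w : ℤ)
    (hy : (p : ℤ) ∣ y) (hw : (p : ℤ) ∣ w) (hne : ¬ (y = 0 ∧ w = 0))
    (h3 : y ^ 3 ≠ n * w ^ 3) :
    3 ≤ padicValInt p (y ^ 3 - n * w ^ 3) ∧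
      ((¬ ∃ x : ℤ, x ^ 3 ≡ n [ZMOD (p : ℤ)]) → 3 ∣ padicValInt p (y ^ 3 - n * w ^ 3)) := by
  haveI : Fact p.Prime := ⟨hp⟩
  constructor
  · have hdvd : (p : ℤ) ^ 3 ∣ (y ^ 3 - n * w ^ 3) :=
      dvd_sub (pow_dvd_pow_of_dvd hy 3) ((pow_dvd_pow_of_dvd hw 3).mul_left n)
    rcases (padicValInt_dvd_iff 3 _).mp hdvd with h0 | hle
    · exact absurd (sub_eq_zero.mp h0) h3
    · exact hle
  · intro hnr
    exact aux_mult p hp n hnr _ y w h3 rfl
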